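/- Let a and b be coprime positive integers and k ≥ 1. Then the formal power series over ℤ whose j-th coefficient is 1 if j ∈ R_k(a,b) and 0 otherwise satisfies (∑_{j ∈ R_k(a,b)} X^j) · (1 - X^a) · (1 - X^b) = X^{ab(k-1)} · (1 - X^{ab})². Equivalently, the polynomial p_k(a,b;z) := ∑_{j ∈ R_k(a,b)} z^j equals z^{ab(k-1)}(1 - z^{ab})² / ((1 - z^a)(1 - z^b)). -/

import Mathlib

/-- `repCount a b j` is the number of representations of `j` in the form
`m * a + n * b` with `m, n : ℕ`. -/
noncomputable def repCount (a b j : ℕ) : ℕ :=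
  Nat.card {p : ℕ × ℕ // p.1 * a + p.2 * b = j}

section Aux

variable {a b : ℕ}

lemma finite_reps (ha : 0 < a) (hb : 0 < b) (j : ℕ) :
    Finite {p : ℕ × ℕ // p.1 * a + p.2 * b = j} := by
  have hbd : ∀ p : {p : ℕ × ℕ // p.1 * a + p.2 * b = j}, p.1.1 < j + 1 ∧ p.1.2 < j + 1 := by
    rintro ⟨⟨m, n⟩, h⟩
    simp only at h ⊢
    constructor
    · nlinarith
    · nlinarith
  apply Finite.of_injective
    (fun p => ((⟨p.1.1, (hbd p).1⟩ : Fin (j+1)), (⟨p.1.2, (hbd p).2⟩ : Fin (j+1))))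
  rintro ⟨⟨m, n⟩, h⟩ ⟨⟨m', n'⟩, h'⟩ heq
  simp only [Prod.mk.injEq, Fin.mk.injEq] at heq
  exact Subtype.ext (Prod.ext heq.1 heq.2)

lemma reps_unique (hab : Nat.Coprime a b) {j : ℕ} {p q : ℕ × ℕ}
    (hp : p.1 * a + p.2 * b = j) (hq : q.1 * a + q.2 * b = j)
    (hp2 : p.2 < a) (hq2 : q.2 < a) : p = q := by
  have ha : 0 < a := lt_of_le_of_lt (Nat.zero_le _) hp2
  have h1 : p.2 * b ≡ q.2 * b [MOD a] := by
    unfold Nat.ModEq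
    conv_lhs => rw [← Nat.add_mul_mod_self_right (p.2 * b) p.1 a]
    conv_rhs => rw [← Nat.add_mul_mod_self_right (q.2 * b) q.1 a]
    rw [add_comm (p.2 * b), add_comm (q.2 * b), hp, hq]
  have h2 : p.2 ≡ q.2 [MOD a] := Nat.ModEq.cancel_right_of_coprime hab h1
  have h3 : p.2 = q.2 := by
    have h := h2
    unfold Nat.ModEq at h
    rwa [Nat.mod_eq_of_lt hp2, Nat.mod_eq_of_lt hq2] at h
  have h4 : p.1 * a = q.1 * a := by rw [h3] at hp; omega
  have h5 : p.1 = q.1 := Nat.eq_of_mul_eq_mul_right ha h4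
  exact Prod.ext h5 h3

lemma reps_exists (ha : 0 < a) (hb : 0 < b) (hab : Nat.Coprime a b) (j : ℕ) :
    ∃ p : ℕ × ℕ, p.1 * a + p.2 * b = j + a * b ∧ p.2 < a := by
  haveI : NeZero a := ⟨ha.ne'⟩
  set u : (ZMod a)ˣ := ZMod.unitOfCoprime b hab.symm with hu
  set n0 : ℕ := ((j : ZMod a) * ((↑u⁻¹ : ZMod a))).val with hn0
  have hlt : n0 < a := ZMod.val_lt _
  have hle : n0 * b ≤ j + a * b := by nlinarith
  have hcast : ((n0 : ℕ) : ZMod a) = (j : ZMod a) * ((↑u⁻¹ : ZMod a)) := by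
    rw [hn0, ZMod.natCast_val, ZMod.cast_id]
  have hdvd : a ∣ j + a * b - n0 * b := by
    rw [← ZMod.natCast_eq_zero_iff]
    rw [Nat.cast_sub hle]
    push_cast
    rw [hcast, ZMod.natCast_self]
    have hub : ((u : (ZMod a)ˣ) : ZMod a) = (b : ZMod a) := ZMod.coe_unitOfCoprime b hab.symm
    rw [← hub]
    have h1 : ((u⁻¹ : (ZMod a)ˣ) : ZMod a) * ((u : (ZMod a)ˣ) : ZMod a) = 1 := u.inv_mul
    calc (j : ZMod a) + 0 * ((u : (ZMod a)ˣ) : ZMod a) -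
          (j : ZMod a) * ((u⁻¹ : (ZMod a)ˣ) : ZMod a) * ((u : (ZMod a)ˣ) : ZMod a)
        = (j : ZMod a) - (j : ZMod a) * (((u⁻¹ : (ZMod a)ˣ) : ZMod a) *
            ((u : (ZMod a)ˣ) : ZMod a)) := by ring
      _ = 0 := by rw [h1, mul_one, sub_self]
  refine ⟨((j + a * b - n0 * b) / a, n0), ?_, hlt⟩
  simp only
  rw [Nat.div_mul_cancel hdvd]
  omega

lemma repCount_add (ha : 0 < a) (hb : 0 < b) (hab : Nat.Coprime a b) (j : ℕ) :
    repCount a b (j + a * b) = repCount a b j + 1 := by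
  haveI := finite_reps ha hb j
  haveI := finite_reps ha hb (j + a * b)
  obtain ⟨p0, hp0, hp0a⟩ := reps_exists ha hb hab j
  let f : Option {p : ℕ × ℕ // p.1 * a + p.2 * b = j} →
      {p : ℕ × ℕ // p.1 * a + p.2 * b = j + a * b} :=
    fun o => o.elim ⟨p0, hp0⟩ (fun q => ⟨(q.1.1, q.1.2 + a), by
      rw [add_mul, ← add_assoc, q.2]⟩)
  have hbij : Function.Bijective f := by
    constructor
    · rintro (_ | q) (_ | q') h
      · rfl
      · exfalso
        have h2 := congrArg (fun p => p.1.2) h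
        simp only [f, Option.elim] at h2
        omega
      · exfalso
        have h2 := congrArg (fun p => p.1.2) h
        simp only [f, Option.elim] at h2
        omega
      · have h1 := congrArg (fun p => p.1.1) h
        have h2 := congrArg (fun p => p.1.2) h
        simp only [f, Option.elim] at h1 h2
        have : q = q' := Subtype.ext (Prod.ext h1 (by omega))
        rw [this]
    · rintro ⟨⟨m, n⟩, hmn⟩
      by_cases hn : a ≤ n
      · have key : (m * a + (n - a) * b) + a * b = j + a * b := by
          rw [add_assoc, ← add_mul, Nat.sub_add_cancel hn]
          exact hmn
        refine ⟨some ⟨(m, n - a), Nat.add_right_cancel key⟩, ?_⟩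
        simp only [f, Option.elim]
        have h2 : n - a + a = n := by omega
        exact Subtype.ext (Prod.ext rfl h2)
      · refine ⟨none, ?_⟩
        simp only [f, Option.elim]
        have hna : n < a := by omega
        exact Subtype.ext (reps_unique hab hp0 hmn hp0a hna)
  calc repCount a b (j + a * b)
      = Nat.card (Option {p : ℕ × ℕ // p.1 * a + p.2 * b = j}) :=
        (Nat.card_congr (Equiv.ofBijective f hbij)).symm
    _ = repCount a b j + 1 := Finite.card_option

lemma repCount_small (ha : 0 < a) (hb : 0 < b) (hab : Nat.Coprime a b) {j : ℕ}
    (hj : j < a * b) : repCount a b j ≤ 1 := by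
  haveI := finite_reps ha hb j
  rw [repCount, Finite.card_le_one_iff_subsingleton]
  constructor
  rintro ⟨p, hp⟩ ⟨q, hq⟩
  have hpa : p.2 < a := by
    by_contra hcon
    push_neg at hcon
    have : a * b ≤ p.2 * b := Nat.mul_le_mul_right b hcon
    omega
  have hqa : q.2 < a := by
    by_contra hcon
    push_neg at hcon
    have : a * b ≤ q.2 * b := Nat.mul_le_mul_right b hcon
    omega
  exact Subtype.ext (reps_unique hab hp hq hpa hqa)

/-- Abstract counting lemma. -/
lemma ge_iff_aux (r : ℕ → ℕ) (c : ℕ) (hc : 0 < c) (step : ∀ j, r (j + c) = r j + 1)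
    (small : ∀ j, j < c → r j ≤ 1) (k : ℕ) (hk : 1 ≤ k) (j : ℕ) :
    k ≤ r j ↔ c * (k - 1) ≤ j ∧ 1 ≤ r (j - c * (k - 1)) := by
  induction k, hk using Nat.le_induction generalizing j with
  | base => simp
  | succ k hk1 ih =>
    have hck : c * (k + 1 - 1) = c * (k - 1) + c := by
      rw [Nat.add_sub_cancel, ← Nat.mul_succ]
      congr 1
      omega
    set d := c * (k - 1) with hd
    rw [hck]
    constructor
    · intro h
      have hcj : c ≤ j := by
        by_contra hcon
        push_neg at hcon
        have := small j hcon
        omega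
      have hr : r j = r (j - c) + 1 := by
        conv_lhs => rw [show j = (j - c) + c by omega]
        exact step _
      have hk' : k ≤ r (j - c) := by omega
      obtain ⟨h1, h2⟩ := (ih _).mp hk'
      refine ⟨by omega, ?_⟩
      have : j - c - d = j - (d + c) := by omega
      rwa [this] at h2
    · rintro ⟨h1, h2⟩
      have hcj : c ≤ j := by omega
      have hr : r j = r (j - c) + 1 := by
        conv_lhs => rw [show j = (j - c) + c by omega]
        exact step _
      have : j - (d + c) = j - c - d := by omega
      rw [this] at h2
      have := (ih (j - c)).mpr ⟨by omega, h2⟩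
      omega

end Aux

section GenFct

open PowerSeries

variable {a b : ℕ}

/-- geometric-type series -/
noncomputable def geom (a : ℕ) : PowerSeries ℤ :=
  PowerSeries.mk fun j => if a ∣ j then 1 else 0

lemma geom_mul (ha : 0 < a) : geom a * (1 - (X : PowerSeries ℤ) ^ a) = 1 := by
  ext n
  rw [mul_sub, mul_one, map_sub, coeff_mul_X_pow', coeff_one]
  simp only [geom, coeff_mk]
  rcases Nat.eq_zero_or_pos n with hn | hn
  · subst hn
    simp [ha.ne']
  · have hne : ¬ n = 0 := hn.ne'
    simp only [hne, if_false]
    by_cases hle : a ≤ n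
    · have : a ∣ n ↔ a ∣ n - a := by
        constructor
        · intro h; exact (Nat.dvd_sub h dvd_rfl)
        · intro h
          have : n = (n - a) + a := by omega
          rw [this]; exact Nat.dvd_add h dvd_rfl
      simp only [hle, if_true]
      by_cases hd : a ∣ n
      · rw [if_pos hd, if_pos (this.mp hd)]; ring
      · rw [if_neg hd, if_neg (fun hc => hd (this.mpr hc))]; ring
    · have hnd : ¬ a ∣ n := by
        intro hd
        exact hle (Nat.le_of_dvd hn hd)
      simp [hle, hnd]

lemma geom_mul_geom (ha : 0 < a) (hb : 0 < b) (j : ℕ) :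
    (PowerSeries.coeff j) (geom a * geom b) = (repCount a b j : ℤ) := by
  classical
  rw [coeff_mul]
  simp only [geom, coeff_mk]
  have hsum : ∑ p ∈ Finset.HasAntidiagonal.antidiagonal j,
      ((if a ∣ p.1 then (1 : ℤ) else 0) * (if b ∣ p.2 then 1 else 0)) =
      ∑ p ∈ Finset.HasAntidiagonal.antidiagonal j, (if a ∣ p.1 ∧ b ∣ p.2 then (1 : ℤ) else 0) := by
    apply Finset.sum_congr rfl
    intro p _
    by_cases h1 : a ∣ p.1 <;> by_cases h2 : b ∣ p.2 <;> simp [h1, h2]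
  rw [hsum, Finset.sum_boole]
  congr 1
  haveI := finite_reps ha hb j
  rw [repCount]
  have e : {p : ℕ × ℕ // p.1 * a + p.2 * b = j} ≃
      {p // p ∈ (Finset.HasAntidiagonal.antidiagonal j).filter fun p => a ∣ p.1 ∧ b ∣ p.2} :=
    { toFun := fun q => ⟨(q.1.1 * a, q.1.2 * b), by
        simp only [Finset.mem_filter, Finset.HasAntidiagonal.mem_antidiagonal]
        exact ⟨q.2, ⟨q.1.1, mul_comm _ _⟩, ⟨q.1.2, mul_comm _ _⟩⟩⟩
      invFun := fun p => ⟨(p.1.1 / a, p.1.2 / b), by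
        have hm := p.2
        simp only [Finset.mem_filter, Finset.HasAntidiagonal.mem_antidiagonal] at hm
        rw [Nat.div_mul_cancel hm.2.1, Nat.div_mul_cancel hm.2.2]
        exact hm.1⟩
      left_inv := by
        rintro ⟨⟨m, n⟩, h⟩
        simp [Nat.mul_div_cancel _ ha, Nat.mul_div_cancel _ hb]
      right_inv := by
        rintro ⟨⟨x, y⟩, h⟩
        simp only [Finset.mem_filter, Finset.HasAntidiagonal.mem_antidiagonal] at h
        simp [Nat.div_mul_cancel h.2.1, Nat.div_mul_cancel h.2.2] }
  rw [Nat.card_congr e, Nat.card_eq_fintype_card, Fintype.card_coe]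

end GenFct

/-- For `k ≥ 1`, the generating function of the set `R_k(a,b)` of integers with exactly
`k` representations satisfies
`(∑_{j ∈ R_k(a,b)} X^j) * (1 - X^a) * (1 - X^b) = X^(a*b*(k-1)) * (1 - X^(a*b))^2`. -/
theorem frobenius_genfct_Rk (a b k : ℕ) (ha : 0 < a) (hb : 0 < b) (hab : Nat.Coprime a b)
    (hk : 1 ≤ k) :
    (PowerSeries.mk fun j => if repCount a b j = k then (1 : ℤ) else 0) *
        (1 - (PowerSeries.X : PowerSeries ℤ) ^ a) * (1 - (PowerSeries.X : PowerSeries ℤ) ^ b) =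
      (PowerSeries.X : PowerSeries ℤ) ^ (a * b * (k - 1)) *
        (1 - (PowerSeries.X : PowerSeries ℤ) ^ (a * b)) ^ 2 := by
  classical
  open PowerSeries in
  have hc : 0 < a * b := Nat.mul_pos ha hb
  have step : ∀ j, repCount a b (j + a * b) = repCount a b j + 1 :=
    repCount_add ha hb hab
  have small : ∀ j, j < a * b → repCount a b j ≤ 1 := fun j hj =>
    repCount_small ha hb hab hj
  set S : PowerSeries ℤ := PowerSeries.mk fun j => (repCount a b j : ℤ) with hS
  set A : PowerSeries ℤ := PowerSeries.mk fun j => if 1 ≤ repCount a b j then (1 : ℤ) else 0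
    with hA
  -- S * (1 - X^a) * (1 - X^b) = 1
  have hS1 : S * (1 - (X : PowerSeries ℤ) ^ a) * (1 - (X : PowerSeries ℤ) ^ b) = 1 := by
    have hSg : S = geom a * geom b := by
      ext j
      rw [geom_mul_geom ha hb, hS, coeff_mk]
    rw [hSg]
    trans (geom a * (1 - (X : PowerSeries ℤ) ^ a)) * (geom b * (1 - (X : PowerSeries ℤ) ^ b))
    · ring
    · rw [geom_mul ha, geom_mul hb, one_mul]
  -- A = S * (1 - X^(a*b))
  have hAS : A = S * (1 - (X : PowerSeries ℤ) ^ (a * b)) := by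
    ext j
    rw [mul_sub, mul_one, map_sub, coeff_mul_X_pow', hA, hS]
    simp only [coeff_mk]
    by_cases hle : a * b ≤ j
    · have hr : repCount a b j = repCount a b (j - a * b) + 1 := by
        conv_lhs => rw [show j = (j - a * b) + a * b by omega]
        exact step _
      simp only [hle, if_true]
      rw [if_pos (by omega)]
      push_cast
      omega
    · have := small j (by omega)
      simp only [hle, if_false]
      split_ifs with h <;> push_cast <;> omega
  -- B k = X^(a*b*(k-1)) * A for the "at least k" series
  have hB : ∀ m : ℕ, 1 ≤ m →
      (PowerSeries.mk fun j => if m ≤ repCount a b j then (1 : ℤ) else 0) =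
        (X : PowerSeries ℤ) ^ (a * b * (m - 1)) * A := by
    intro m hm
    ext j
    rw [coeff_X_pow_mul', hA]
    simp only [coeff_mk]
    have hiff := ge_iff_aux (repCount a b) (a * b) hc step small m hm j
    by_cases hm1 : m ≤ repCount a b j
    · rw [if_pos hm1]
      obtain ⟨h1, h2⟩ := hiff.mp hm1
      rw [if_pos h1, if_pos h2]
    · rw [if_neg hm1]
      split_ifs with h1 h2
      · exact absurd (hiff.mpr ⟨h1, h2⟩) hm1
      · rfl
      · rfl
  -- decompose indicator of R_k
  have hI : (PowerSeries.mk fun j => if repCount a b j = k then (1 : ℤ) else 0) =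
      (PowerSeries.mk fun j => if k ≤ repCount a b j then (1 : ℤ) else 0) -
        (PowerSeries.mk fun j => if k + 1 ≤ repCount a b j then (1 : ℤ) else 0) := by
    ext j
    rw [map_sub]
    simp only [coeff_mk]
    split_ifs <;> omega
  have hpow : (X : PowerSeries ℤ) ^ (a * b * (k + 1 - 1)) =
      (X : PowerSeries ℤ) ^ (a * b * (k - 1)) * (X : PowerSeries ℤ) ^ (a * b) := by
    rw [← pow_add]
    congr 1
    rw [Nat.add_sub_cancel, ← Nat.mul_succ]
    congr 1
    omega
  have hIk : (PowerSeries.mk fun j => if repCount a b j = k then (1 : ℤ) else 0) =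
      (X : PowerSeries ℤ) ^ (a * b * (k - 1)) *
        ((1 - (X : PowerSeries ℤ) ^ (a * b)) * A) := by
    rw [hI, hB k hk, hB (k + 1) (by omega), hpow]
    ring
  have hA1 : A * ((1 - (X : PowerSeries ℤ) ^ a) * (1 - (X : PowerSeries ℤ) ^ b)) =
      1 - (X : PowerSeries ℤ) ^ (a * b) := by
    rw [hAS]
    calc S * (1 - (X : PowerSeries ℤ) ^ (a * b)) *
          ((1 - (X : PowerSeries ℤ) ^ a) * (1 - (X : PowerSeries ℤ) ^ b))
        = S * (1 - (X : PowerSeries ℤ) ^ a) * (1 - (X : PowerSeries ℤ) ^ b) *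
            (1 - (X : PowerSeries ℤ) ^ (a * b)) := by ring
      _ = 1 - (X : PowerSeries ℤ) ^ (a * b) := by rw [hS1, one_mul]
  rw [hIk]
  linear_combination ((X : PowerSeries ℤ) ^ (a * b * (k - 1)) *
    (1 - (X : PowerSeries ℤ) ^ (a * b))) * hA1
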